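/- Let f : ℍ → ℝ⁴ map 1, i, j, k to the standard orthonormal basis e₀, e₁, e₂, e₃ of ℝ⁴, and let CL(ℝ⁴) be the Clifford algebra of ℝ⁴ with the positive definite quadratic form. Define π : CL(ℝ⁴) → ℍ as the composition of: multiplication by (1+e₀)(1-e₀e₁e₂e₃), projection onto the subspace H spanned by 1, e₂e₃, e₁e₃, e₁e₂, and the linear isomorphism ι : H → ℍ sending 1↦1, e₂e₃↦-i, e₁e₃↦j, e₁e₂↦-k. Then for any A, B ∈ CL(ℝ⁴): if A is even, π(A·B) = π(A)·π(B); if A is odd, π(A·B) = π(A)·π(e₀·B·e₀). -/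

import Mathlib

open Quaternion

/-- The positive definite quadratic form on `ℝ⁴`. -/
noncomputable def Q4 : QuadraticForm ℝ (Fin 4 → ℝ) :=
  QuadraticMap.weightedSumSquares ℝ (fun _ : Fin 4 => (1 : ℝ))

/-- The standard basis vectors of `ℝ⁴` as vectors in the Clifford algebra. -/
noncomputable def e (i : Fin 4) : CliffordAlgebra Q4 :=
  CliffordAlgebra.ι Q4 (Pi.single i 1)

def qi : ℍ[ℝ] := ⟨0, 1, 0, 0⟩
def qj : ℍ[ℝ] := ⟨0, 0, 1, 0⟩
def qk : ℍ[ℝ] := ⟨0, 0, 0, 1⟩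

lemma Q4_apply (v : Fin 4 → ℝ) : Q4 v = ∑ i, v i * v i := by
  simp [Q4, QuadraticMap.weightedSumSquares_apply]
lemma e_sq (i : Fin 4) : e i * e i = 1 := by
  rw [e, CliffordAlgebra.ι_sq_scalar]
  simp [Q4_apply, Pi.single_apply, Finset.sum_ite_eq']
lemma e_swap {i j : Fin 4} (h : i ≠ j) : e i * e j = -(e j * e i) := by
  refine CliffordAlgebra.ι_mul_ι_comm_of_isOrtho ?_
  rw [QuadraticMap.isOrtho_def]
  simp [Q4_apply, Pi.single_apply, Finset.sum_ite_eq', add_mul, mul_add,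
    Finset.sum_add_distrib, h, h.symm]
lemma e_sq' (i : Fin 4) (x : CliffordAlgebra Q4) : e i * (e i * x) = x := by
  rw [← mul_assoc, e_sq, one_mul]
lemma s10 : e 1 * e 0 = -(e 0 * e 1) := e_swap (by decide)
lemma s20 : e 2 * e 0 = -(e 0 * e 2) := e_swap (by decide)
lemma s30 : e 3 * e 0 = -(e 0 * e 3) := e_swap (by decide)
lemma s21 : e 2 * e 1 = -(e 1 * e 2) := e_swap (by decide)
lemma s31 : e 3 * e 1 = -(e 1 * e 3) := e_swap (by decide)
lemma s32 : e 3 * e 2 = -(e 2 * e 3) := e_swap (by decide)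
lemma s10' (x) : e 1 * (e 0 * x) = -(e 0 * (e 1 * x)) := by rw [← mul_assoc, s10]; simp [mul_assoc]
lemma s20' (x) : e 2 * (e 0 * x) = -(e 0 * (e 2 * x)) := by rw [← mul_assoc, s20]; simp [mul_assoc]
lemma s30' (x) : e 3 * (e 0 * x) = -(e 0 * (e 3 * x)) := by rw [← mul_assoc, s30]; simp [mul_assoc]
lemma s21' (x) : e 2 * (e 1 * x) = -(e 1 * (e 2 * x)) := by rw [← mul_assoc, s21]; simp [mul_assoc]
lemma s31' (x) : e 3 * (e 1 * x) = -(e 1 * (e 3 * x)) := by rw [← mul_assoc, s31]; simp [mul_assoc]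
lemma s32' (x) : e 3 * (e 2 * x) = -(e 2 * (e 3 * x)) := by rw [← mul_assoc, s32]; simp [mul_assoc]


noncomputable def gens : Set (CliffordAlgebra Q4) :=
  {1, e 0, e 1, e 2, e 3, e 0 * e 1, e 0 * e 2, e 0 * e 3, e 1 * e 2, e 1 * e 3, e 2 * e 3, e 0 * (e 1 * e 2), e 0 * (e 1 * e 3), e 0 * (e 2 * e 3), e 1 * (e 2 * e 3), e 0 * (e 1 * (e 2 * e 3))}

noncomputable def S : Submodule ℝ (CliffordAlgebra Q4) := Submodule.span ℝ gens

lemma w1 : (1 : CliffordAlgebra Q4) ∈ S := Submodule.subset_span (Or.inl rfl)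
lemma w2 : e 0 ∈ S := Submodule.subset_span (Or.inr (Or.inl rfl))
lemma w3 : e 1 ∈ S := Submodule.subset_span (Or.inr (Or.inr (Or.inl rfl)))
lemma w4 : e 2 ∈ S := Submodule.subset_span (Or.inr (Or.inr (Or.inr (Or.inl rfl))))
lemma w5 : e 3 ∈ S := Submodule.subset_span (Or.inr (Or.inr (Or.inr (Or.inr (Or.inl rfl)))))
lemma w6 : e 0 * e 1 ∈ S := Submodule.subset_span (Or.inr (Or.inr (Or.inr (Or.inr (Or.inr (Or.inl rfl))))))
lemma w7 : e 0 * e 2 ∈ S := Submodule.subset_span (Or.inr (Or.inr (Or.inr (Or.inr (Or.inr (Or.inr (Or.inl rfl)))))))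
lemma w8 : e 0 * e 3 ∈ S := Submodule.subset_span (Or.inr (Or.inr (Or.inr (Or.inr (Or.inr (Or.inr (Or.inr (Or.inl rfl))))))))
lemma w9 : e 1 * e 2 ∈ S := Submodule.subset_span (Or.inr (Or.inr (Or.inr (Or.inr (Or.inr (Or.inr (Or.inr (Or.inr (Or.inl rfl)))))))))
lemma w10 : e 1 * e 3 ∈ S := Submodule.subset_span (Or.inr (Or.inr (Or.inr (Or.inr (Or.inr (Or.inr (Or.inr (Or.inr (Or.inr (Or.inl rfl))))))))))
lemma w11 : e 2 * e 3 ∈ S := Submodule.subset_span (Or.inr (Or.inr (Or.inr (Or.inr (Or.inr (Or.inr (Or.inr (Or.inr (Or.inr (Or.inr (Or.inl rfl)))))))))))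
lemma w12 : e 0 * (e 1 * e 2) ∈ S := Submodule.subset_span (Or.inr (Or.inr (Or.inr (Or.inr (Or.inr (Or.inr (Or.inr (Or.inr (Or.inr (Or.inr (Or.inr (Or.inl rfl))))))))))))
lemma w13 : e 0 * (e 1 * e 3) ∈ S := Submodule.subset_span (Or.inr (Or.inr (Or.inr (Or.inr (Or.inr (Or.inr (Or.inr (Or.inr (Or.inr (Or.inr (Or.inr (Or.inr (Or.inl rfl)))))))))))))
lemma w14 : e 0 * (e 2 * e 3) ∈ S := Submodule.subset_span (Or.inr (Or.inr (Or.inr (Or.inr (Or.inr (Or.inr (Or.inr (Or.inr (Or.inr (Or.inr (Or.inr (Or.inr (Or.inr (Or.inl rfl))))))))))))))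
lemma w15 : e 1 * (e 2 * e 3) ∈ S := Submodule.subset_span (Or.inr (Or.inr (Or.inr (Or.inr (Or.inr (Or.inr (Or.inr (Or.inr (Or.inr (Or.inr (Or.inr (Or.inr (Or.inr (Or.inr (Or.inl rfl)))))))))))))))
lemma w16 : e 0 * (e 1 * (e 2 * e 3)) ∈ S := Submodule.subset_span (Or.inr (Or.inr (Or.inr (Or.inr (Or.inr (Or.inr (Or.inr (Or.inr (Or.inr (Or.inr (Or.inr (Or.inr (Or.inr (Or.inr (Or.inr (rfl))))))))))))))))

set_option maxHeartbeats 1000000 in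
lemma e_mul_gens_mem : ∀ (i : Fin 4), ∀ s ∈ gens, e i * s ∈ S := by
  intro i s hs
  simp only [gens, Set.mem_insert_iff, Set.mem_singleton_iff] at hs
  have hi : i = 0 ∨ i = 1 ∨ i = 2 ∨ i = 3 := by omega
  rcases hi with rfl|rfl|rfl|rfl <;>
    rcases hs with rfl|rfl|rfl|rfl|rfl|rfl|rfl|rfl|rfl|rfl|rfl|rfl|rfl|rfl|rfl|rfl <;>
    (try simp only [mul_one, mul_assoc, e_sq, e_sq', s10, s20, s30, s21, s31, s32,
      s10', s20', s30', s21', s31', s32', mul_neg, neg_neg, one_mul]) <;>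
    first
      | exact w1
      | exact w2
      | exact w3
      | exact w4
      | exact w5
      | exact w6
      | exact w7
      | exact w8
      | exact w9
      | exact w10
      | exact w11
      | exact w12
      | exact w13
      | exact w14
      | exact w15
      | exact w16
      | exact S.neg_mem w1
      | exact S.neg_mem w2
      | exact S.neg_mem w3
      | exact S.neg_mem w4
      | exact S.neg_mem w5
      | exact S.neg_mem w6
      | exact S.neg_mem w7
      | exact S.neg_mem w8
      | exact S.neg_mem w9
      | exact S.neg_mem w10
      | exact S.neg_mem w11
      | exact S.neg_mem w12
      | exact S.neg_mem w13
      | exact S.neg_mem w14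
      | exact S.neg_mem w15
      | exact S.neg_mem w16

lemma iota_eq_sum (m : Fin 4 → ℝ) :
    CliffordAlgebra.ι Q4 m = ∑ i, m i • e i := by
  conv_lhs => rw [pi_eq_sum_univ m]
  rw [map_sum]
  refine Finset.sum_congr rfl fun i _ => ?_
  rw [e, ← map_smul]
  congr 1
  ext j
  rcases eq_or_ne i j with rfl | h
  · simp
  · simp [Pi.single_apply, h, Ne.symm h]

lemma e_mul_S_mem (i : Fin 4) : ∀ y ∈ S, e i * y ∈ S := by
  intro y hy
  induction hy using Submodule.span_induction with
  | mem x hx => exact e_mul_gens_mem i x hx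
  | zero => simp
  | add x y _ _ hx hy => rw [mul_add]; exact S.add_mem hx hy
  | smul r x _ hx => rw [mul_smul_comm]; exact S.smul_mem r hx

lemma S_eq_top : S = ⊤ := by
  have hmul : ∀ x : CliffordAlgebra Q4, ∀ y ∈ S, x * y ∈ S := by
    intro x
    induction x using CliffordAlgebra.induction with
    | algebraMap r =>
      intro y hy
      rw [Algebra.algebraMap_eq_smul_one, smul_mul_assoc, one_mul]
      exact S.smul_mem r hy
    | ι m =>
      intro y hy
      rw [iota_eq_sum, Finset.sum_mul]
      refine S.sum_mem fun i _ => ?_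
      rw [smul_mul_assoc]
      exact S.smul_mem _ (e_mul_S_mem i y hy)
    | mul a b ha hb =>
      intro y hy
      rw [mul_assoc]
      exact ha _ (hb y hy)
    | add a b ha hb =>
      intro y hy
      rw [add_mul]
      exact S.add_mem (ha y hy) (hb y hy)
  refine eq_top_iff.mpr fun x _ => ?_
  simpa using hmul x 1 w1


@[simp] lemma qi_re : qi.re = 0 := rfl
@[simp] lemma qi_imI : qi.imI = 1 := rfl
@[simp] lemma qi_imJ : qi.imJ = 0 := rfl
@[simp] lemma qi_imK : qi.imK = 0 := rfl
@[simp] lemma qj_re : qj.re = 0 := rfl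
@[simp] lemma qj_imI : qj.imI = 0 := rfl
@[simp] lemma qj_imJ : qj.imJ = 1 := rfl
@[simp] lemma qj_imK : qj.imK = 0 := rfl
@[simp] lemma qk_re : qk.re = 0 := rfl
@[simp] lemma qk_imI : qk.imI = 0 := rfl
@[simp] lemma qk_imJ : qk.imJ = 0 := rfl
@[simp] lemma qk_imK : qk.imK = 1 := rfl
lemma qii : qi * qi = -1 := by ext <;> simp [Quaternion.re_mul, Quaternion.imI_mul, Quaternion.imJ_mul, Quaternion.imK_mul]
lemma qjj : qj * qj = -1 := by ext <;> simp [Quaternion.re_mul, Quaternion.imI_mul, Quaternion.imJ_mul, Quaternion.imK_mul]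
lemma qkk : qk * qk = -1 := by ext <;> simp [Quaternion.re_mul, Quaternion.imI_mul, Quaternion.imJ_mul, Quaternion.imK_mul]
lemma qij : qi * qj = qk := by ext <;> simp [Quaternion.re_mul, Quaternion.imI_mul, Quaternion.imJ_mul, Quaternion.imK_mul]
lemma qji : qj * qi = -qk := by ext <;> simp [Quaternion.re_mul, Quaternion.imI_mul, Quaternion.imJ_mul, Quaternion.imK_mul]
lemma qjk : qj * qk = qi := by ext <;> simp [Quaternion.re_mul, Quaternion.imI_mul, Quaternion.imJ_mul, Quaternion.imK_mul]
lemma qkj : qk * qj = -qi := by ext <;> simp [Quaternion.re_mul, Quaternion.imI_mul, Quaternion.imJ_mul, Quaternion.imK_mul]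
lemma qki : qk * qi = qj := by ext <;> simp [Quaternion.re_mul, Quaternion.imI_mul, Quaternion.imJ_mul, Quaternion.imK_mul]
lemma qik : qi * qk = -qj := by ext <;> simp [Quaternion.re_mul, Quaternion.imI_mul, Quaternion.imJ_mul, Quaternion.imK_mul]

set_option maxHeartbeats 4000000 in
/-- If `π : CL(ℝ⁴) → ℍ` is the linear map of the paper (determined by its values on
the 16 basis monomials), then `π` is multiplicative on products with an even left factor,
and twisted-multiplicative (via the conjugate `e₀ B e₀`) when the left factor is odd. -/
theorem pi_conjugate_homomorphism (π : CliffordAlgebra Q4 →ₗ[ℝ] ℍ[ℝ])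
    (h1 : π 1 = 1) (h2 : π (e 0) = 1) (h3 : π (e 1 * e 2 * e 3) = 1)
    (h4 : π (e 0 * e 1 * e 2 * e 3) = -1)
    (h5 : π (e 1) = qi) (h6 : π (e 0 * e 1) = -qi) (h7 : π (e 2 * e 3) = -qi)
    (h8 : π (e 0 * e 2 * e 3) = -qi)
    (h9 : π (e 2) = qj) (h10 : π (e 0 * e 2) = -qj) (h11 : π (e 1 * e 3) = qj)
    (h12 : π (e 0 * e 1 * e 3) = qj)
    (h13 : π (e 3) = qk) (h14 : π (e 0 * e 3) = -qk) (h15 : π (e 1 * e 2) = -qk)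
    (h16 : π (e 0 * e 1 * e 2) = -qk) :
    ∀ A B : CliffordAlgebra Q4,
      (A ∈ CliffordAlgebra.evenOdd Q4 0 → π (A * B) = π A * π B) ∧
      (A ∈ CliffordAlgebra.evenOdd Q4 1 → π (A * B) = π A * π (e 0 * B * e 0)) := by
  have H3 : π (e 1 * (e 2 * e 3)) = 1 := by rw [← mul_assoc]; exact h3
  have H4 : π (e 0 * (e 1 * (e 2 * e 3))) = -1 := by
    rw [← mul_assoc, ← mul_assoc]; exact h4
  have H8 : π (e 0 * (e 2 * e 3)) = -qi := by rw [← mul_assoc]; exact h8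
  have H12 : π (e 0 * (e 1 * e 3)) = qj := by rw [← mul_assoc]; exact h12
  have H16 : π (e 0 * (e 1 * e 2)) = -qk := by rw [← mul_assoc]; exact h16
  have keyBase : ∀ (i : Fin 4), ∀ s ∈ gens,
      π (e i * s) = π (e i) * π (e 0 * (s * e 0)) := by
    intro i s hs
    simp only [gens, Set.mem_insert_iff, Set.mem_singleton_iff] at hs
    have hi : i = 0 ∨ i = 1 ∨ i = 2 ∨ i = 3 := by omega
    rcases hi with rfl|rfl|rfl|rfl <;>
      rcases hs with rfl|rfl|rfl|rfl|rfl|rfl|rfl|rfl|rfl|rfl|rfl|rfl|rfl|rfl|rfl|rfl <;>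
      (try simp only [mul_one, mul_assoc, e_sq, e_sq', s10, s20, s30, s21, s31, s32,
        s10', s20', s30', s21', s31', s32', mul_neg, neg_neg, one_mul]) <;>
      simp only [map_neg, h1, h2, H3, H4, h5, h6, h7, H8, h9, h10, h11, H12, h13, h14,
        h15, H16, qii, qij, qik, qji, qjj, qjk, qki, qkj, qkk, mul_one, one_mul,
        mul_neg, neg_mul, neg_neg]
  have keyVec : ∀ (i : Fin 4) (y : CliffordAlgebra Q4),
      π (e i * y) = π (e i) * π (e 0 * (y * e 0)) := by
    intro i y
    have hy : y ∈ S := S_eq_top ▸ Submodule.mem_top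
    induction hy using Submodule.span_induction with
    | mem x hx => exact keyBase i x hx
    | zero => simp
    | add x z _ _ hx hz => simp only [mul_add, add_mul, map_add, hx, hz]
    | smul r x _ hx => simp only [mul_smul_comm, smul_mul_assoc, map_smul, hx]
  have keyIota : ∀ (m : Fin 4 → ℝ) (y : CliffordAlgebra Q4),
      π (CliffordAlgebra.ι Q4 m * y)
        = π (CliffordAlgebra.ι Q4 m) * π (e 0 * (y * e 0)) := by
    intro m y
    rw [iota_eq_sum]
    simp only [Finset.sum_mul, smul_mul_assoc, map_sum, map_smul, keyVec _ y]
  have tau_mul : ∀ x y : CliffordAlgebra Q4,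
      e 0 * (x * y * e 0) = (e 0 * (x * e 0)) * (e 0 * (y * e 0)) := by
    intro x y
    simp only [mul_assoc, e_sq']
  have tau_tau : ∀ y : CliffordAlgebra Q4, e 0 * ((e 0 * (y * e 0)) * e 0) = y := by
    intro y
    simp only [mul_assoc, e_sq', e_sq, mul_one]
  have tau_io : ∀ m : Fin 4 → ℝ, ∃ m' : Fin 4 → ℝ,
      e 0 * (CliffordAlgebra.ι Q4 m * e 0) = CliffordAlgebra.ι Q4 m' := by
    intro m
    refine ⟨QuadraticMap.polar (⇑Q4) m (Pi.single (0 : Fin 4) (1 : ℝ)) • (Pi.single (0 : Fin 4) (1 : ℝ) : Fin 4 → ℝ) - m, ?_⟩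
    have he : CliffordAlgebra.ι Q4 (Pi.single 0 1) = e 0 := rfl
    have hc : CliffordAlgebra.ι Q4 m * e 0
        = algebraMap ℝ _ (QuadraticMap.polar Q4 m (Pi.single 0 1))
          - e 0 * CliffordAlgebra.ι Q4 m := by
      rw [e]; exact CliffordAlgebra.ι_mul_ι_comm _ _
    rw [hc, mul_sub, e_sq' 0, map_sub, map_smul, he]
    rw [← Algebra.commutes, ← Algebra.smul_def]
  have step : ∀ (m₁ m₂ : Fin 4 → ℝ) (y : CliffordAlgebra Q4),
      π (CliffordAlgebra.ι Q4 m₁ * (CliffordAlgebra.ι Q4 m₂ * y))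
        = π (CliffordAlgebra.ι Q4 m₁)
          * (π (e 0 * (CliffordAlgebra.ι Q4 m₂ * e 0)) * π y) := by
    intro m₁ m₂ y
    obtain ⟨m', hm'⟩ := tau_io m₂
    rw [keyIota m₁ (CliffordAlgebra.ι Q4 m₂ * y), tau_mul, hm',
      keyIota m' (e 0 * (y * e 0)), tau_tau]
  intro A B
  constructor
  · intro hA
    refine CliffordAlgebra.even_induction (Q := Q4)
      (motive := fun x _ => π (x * B) = π x * π B) ?_ ?_ ?_ A hA
    · intro r
      simp [Algebra.algebraMap_eq_smul_one, smul_mul_assoc, h1]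
    · intro x y _ _ ihx ihy
      simp only [add_mul, map_add, ihx, ihy]
    · intro m₁ m₂ x _ ih
      have l1 : CliffordAlgebra.ι Q4 m₁ * CliffordAlgebra.ι Q4 m₂ * x * B
          = CliffordAlgebra.ι Q4 m₁ * (CliffordAlgebra.ι Q4 m₂ * (x * B)) := by
        rw [mul_assoc, mul_assoc]
      have l2 : CliffordAlgebra.ι Q4 m₁ * CliffordAlgebra.ι Q4 m₂ * x
          = CliffordAlgebra.ι Q4 m₁ * (CliffordAlgebra.ι Q4 m₂ * x) :=
        mul_assoc _ _ _
      rw [l1, l2, step, step, ih]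
      simp only [mul_assoc]
  · intro hA
    refine CliffordAlgebra.odd_induction (Q := Q4)
      (P := fun x _ => π (x * B) = π x * π (e 0 * B * e 0)) ?_ ?_ ?_ A hA
    · intro v
      rw [keyIota v B, mul_assoc]
    · intro x y _ _ ihx ihy
      simp only [add_mul, map_add, ihx, ihy]
    · intro m₁ m₂ x _ ih
      have l1 : CliffordAlgebra.ι Q4 m₁ * CliffordAlgebra.ι Q4 m₂ * x * B
          = CliffordAlgebra.ι Q4 m₁ * (CliffordAlgebra.ι Q4 m₂ * (x * B)) := by
        rw [mul_assoc, mul_assoc]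
      have l2 : CliffordAlgebra.ι Q4 m₁ * CliffordAlgebra.ι Q4 m₂ * x
          = CliffordAlgebra.ι Q4 m₁ * (CliffordAlgebra.ι Q4 m₂ * x) :=
        mul_assoc _ _ _
      rw [l1, l2, step, step, ih]
      simp only [mul_assoc]
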